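/- arXiv:1408.4157 — 3 statements merged into one kernel-verified Lean document; each statement's English description precedes it below -/
import Mathlib

section
/- For d-dimensional tensor-product orthonormal Legendre polynomials of total order at most p, the supremum over ξ ∈ [-1,1]^d of max_{‖k‖₁ ≤ p} |ψ_k(ξ)|² is at most (2p/d + 1)^d, and consequently at most exp(2p). -/
open Polynomial Set

/-- The classical Legendre polynomial of degree `k`, via the Rodrigues formula. -/
noncomputable def legendre (k : ℕ) : Polynomial ℝ :=
  ((1 : ℝ) / (2 ^ k * k.factorial)) • derivative^[k] ((X ^ 2 - 1) ^ k)

/-- The orthonormalized Legendre polynomial with respect to the uniform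
probability measure on `[-1,1]`. -/
noncomputable def legendreOrtho (k : ℕ) : Polynomial ℝ :=
  Real.sqrt (2 * k + 1) • legendre k

theorem legendre_base (n : ℕ) (hn : 1 ≤ n) :
    ((X:ℝ[X])^2 - 1) * derivative (((X:ℝ[X])^2 - 1)^n) = (C (2*(n:ℝ))) * (X * ((X^2-1)^n)) := by
  rw [derivative_pow]
  have h1 : derivative ((X:ℝ[X])^2 - 1) = C 2 * X := by
    rw [derivative_sub, derivative_one, derivative_X_pow]; push_cast; ring
  rw [h1]
  have h2 : ((X:ℝ[X])^2-1) * ((X:ℝ[X])^2-1)^(n-1) = ((X:ℝ[X])^2-1)^n := by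
    rw [← pow_succ']; congr 1; omega
  rw [C_mul]
  linear_combination (C (n:ℝ) * C 2 * X) * h2

theorem legendre_ode_aux (n : ℕ) (hn : 1 ≤ n) :
    ((X:ℝ[X])^2 - 1) * derivative^[n+2] (((X:ℝ[X])^2-1)^n)
      + C 2 * X * derivative^[n+1] (((X:ℝ[X])^2-1)^n)
      = C ((n:ℝ)*((n:ℝ)+1)) * derivative^[n] (((X:ℝ[X])^2-1)^n) := by
  have hq3 : ∀ k, 3 ≤ k → derivative^[k] ((X:ℝ[X])^2 - 1) = 0 := by
    intro k hk
    apply iterate_derivative_eq_zero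
    have : ((X:ℝ[X])^2 - 1).natDegree ≤ 2 := by compute_degree
    omega
  have hx2 : ∀ k, 2 ≤ k → derivative^[k] (X:ℝ[X]) = 0 := by
    intro k hk
    apply iterate_derivative_eq_zero
    have := Polynomial.natDegree_X_le (R := ℝ)
    omega
  have h := congrArg (fun p => derivative^[n+1] p) (legendre_base n hn)
  rw [mul_comm ((X:ℝ[X])^2-1) _, iterate_derivative_mul,
    iterate_derivative_C_mul, mul_comm (X:ℝ[X]) _, iterate_derivative_mul] at h
  have hsum1 : ∑ k ∈ Finset.range (n+1+1),
        (n+1).choose k • (derivative^[n+1-k] (derivative (((X:ℝ[X])^2-1)^n)) * derivative^[k] ((X:ℝ[X])^2-1))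
      = ∑ k ∈ Finset.range 3,
        (n+1).choose k • (derivative^[n+1-k] (derivative (((X:ℝ[X])^2-1)^n)) * derivative^[k] ((X:ℝ[X])^2-1)) := by
    symm
    apply Finset.sum_subset
    · intro x hx; simp only [Finset.mem_range] at *; omega
    · intro x hx hnx
      simp only [Finset.mem_range] at *
      rw [hq3 x (by omega), mul_zero, smul_zero]
  have hsum2 : ∑ k ∈ Finset.range (n+1+1),
        (n+1).choose k • (derivative^[n+1-k] (((X:ℝ[X])^2-1)^n) * derivative^[k] (X:ℝ[X]))
      = ∑ k ∈ Finset.range 2,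
        (n+1).choose k • (derivative^[n+1-k] (((X:ℝ[X])^2-1)^n) * derivative^[k] (X:ℝ[X])) := by
    symm
    apply Finset.sum_subset
    · intro x hx; simp only [Finset.mem_range] at *; omega
    · intro x hx hnx
      simp only [Finset.mem_range] at *
      rw [hx2 x (by omega), mul_zero, smul_zero]
  rw [hsum1, hsum2] at h
  rw [Finset.sum_range_succ, Finset.sum_range_succ, Finset.sum_range_one] at h
  rw [Finset.sum_range_succ, Finset.sum_range_one] at h
  norm_num at h
  have e1 : derivative^[n] (derivative (derivative (((X:ℝ[X])^2-1)^n)))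
      = derivative^[n+2] (((X:ℝ[X])^2-1)^n) := by
    rw [← Function.iterate_succ_apply, ← Function.iterate_succ_apply]
  have e2 : derivative^[n] (derivative (((X:ℝ[X])^2-1)^n))
      = derivative^[n+1] (((X:ℝ[X])^2-1)^n) := (Function.iterate_succ_apply _ _ _).symm
  have e3 : derivative^[n+1-2] (derivative (((X:ℝ[X])^2-1)^n))
      = derivative^[n] (((X:ℝ[X])^2-1)^n) := by
    rw [← Function.iterate_succ_apply]
    congr 1
    omega
  rw [e1, e2, e3] at h
  have hC2 : (C (2:ℝ) : ℝ[X]) = 2 := by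
    rw [show (2:ℝ)=((2:ℕ):ℝ) by norm_num, C_eq_natCast]
    norm_num
  have hCn : (C ((n:ℝ)*((n:ℝ)+1)) : ℝ[X]) = (n:ℝ[X]) * ((n:ℝ[X])+1) := by
    push_cast [C_mul, C_add, C_1, C_eq_natCast]
    ring
  have hc2 : ((n+1).choose 2) * 2 = (n+1)*n := by
    rw [Nat.choose_two_right]
    simp only [Nat.add_sub_cancel]
    exact Nat.div_mul_cancel (by rw [mul_comm]; exact (Nat.even_mul_succ_self n).two_dvd)
  have hc2' : (((n+1).choose 2 : ℝ[X])) * 2 = ((n:ℝ[X])+1) * (n:ℝ[X]) := by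
    exact_mod_cast congrArg (fun m : ℕ => (m : ℝ[X])) hc2
  rw [hC2] at h ⊢
  rw [hCn]
  linear_combination h - (derivative^[n] (((X:ℝ[X])^2-1)^n)) * hc2'

theorem legendre_ode (n : ℕ) (hn : 1 ≤ n) :
    ((X:ℝ[X])^2-1) * derivative (derivative (legendre n)) + C 2 * X * derivative (legendre n)
      = C ((n:ℝ)*((n:ℝ)+1)) * legendre n := by
  unfold legendre
  simp only [derivative_smul]
  rw [mul_smul_comm, mul_smul_comm, mul_smul_comm, ← smul_add]
  congr 1
  have h1 : derivative (derivative^[n] (((X:ℝ[X])^2-1)^n))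
      = derivative^[n+1] (((X:ℝ[X])^2-1)^n) := (Function.iterate_succ_apply' _ _ _).symm
  have h2 : derivative (derivative^[n+1] (((X:ℝ[X])^2-1)^n))
      = derivative^[n+2] (((X:ℝ[X])^2-1)^n) := (Function.iterate_succ_apply' _ _ _).symm
  rw [h1, h2]
  exact legendre_ode_aux n hn

theorem pow_factorization' (n : ℕ) :
    (((X:ℝ[X])^2 - 1))^n = (X - C 1)^n * (X - C (-1))^n := by
  rw [← mul_pow]
  congr 1
  simp only [C_1, map_neg, sub_neg_eq_add]
  ring

theorem eval_one_iterate (n : ℕ) :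
    (derivative^[n] (((X:ℝ[X])^2-1)^n)).eval 1 = 2^n * (n.factorial:ℝ) := by
  rw [pow_factorization', iterate_derivative_mul, eval_finset_sum,
    Finset.sum_eq_single 0]
  · rw [Nat.choose_zero_right, one_smul, Nat.sub_zero, iterate_derivative_X_sub_pow_self]
    simp
    ring
  · intro k hk hk0
    simp only [Finset.mem_range] at hk
    rw [iterate_derivative_X_sub_pow]
    have : n - (n - k) = k := by omega
    simp [this, zero_pow hk0]
  · simp

theorem eval_neg_one_iterate (n : ℕ) :
    (derivative^[n] (((X:ℝ[X])^2-1)^n)).eval (-1) = (-2:ℝ)^n * (n.factorial:ℝ) := by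
  rw [pow_factorization', iterate_derivative_mul, eval_finset_sum,
    Finset.sum_eq_single n]
  · rw [Nat.choose_self, one_smul, Nat.sub_self, iterate_derivative_X_sub_pow_self]
    simp only [Function.iterate_zero_apply, eval_mul, eval_pow, eval_sub, eval_X, eval_C,
      eval_natCast]
    norm_num
  · intro k hk hkn
    simp only [Finset.mem_range] at hk
    rw [iterate_derivative_X_sub_pow (c := (-1:ℝ))]
    have hnk : n - k ≠ 0 := by omega
    simp [zero_pow hnk]
  · simp

theorem legendre_eval_one (n : ℕ) : (legendre n).eval 1 = 1 := by
  unfold legendre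
  rw [eval_smul, eval_one_iterate]
  have h1 : (2:ℝ)^n ≠ 0 := by positivity
  have h2 : (n.factorial : ℝ) ≠ 0 := by positivity
  rw [smul_eq_mul]
  field_simp

theorem legendre_eval_neg_one (n : ℕ) : (legendre n).eval (-1) = (-1)^n := by
  unfold legendre
  rw [eval_smul, eval_neg_one_iterate]
  have h1 : (2:ℝ)^n ≠ 0 := by positivity
  have h2 : (n.factorial : ℝ) ≠ 0 := by positivity
  have : ((-2:ℝ))^n = (-1)^n * 2^n := by rw [← neg_one_mul, mul_pow]
  rw [this, smul_eq_mul]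
  field_simp

theorem legendre_sq_le (n : ℕ) {x : ℝ} (hx : x ∈ Set.Icc (-1:ℝ) 1) :
    ((legendre n).eval x)^2 ≤ 1 := by
  obtain ⟨hx1, hx2⟩ := hx
  rcases Nat.eq_zero_or_pos n with h0 | hn
  · subst h0
    simp [legendre]
  set c : ℝ := (n:ℝ)*((n:ℝ)+1) with hc
  have hcpos : 0 < c := by
    have : (1:ℝ) ≤ (n:ℝ) := by exact_mod_cast hn
    nlinarith
  set P : ℝ[X] := legendre n with hP
  set Q : ℝ[X] := C c * P^2 + (1 - X^2) * (derivative P)^2 with hQ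
  have hC2 : (C (2:ℝ) : ℝ[X]) = 2 := by
    rw [show (2:ℝ)=((2:ℕ):ℝ) by norm_num, C_eq_natCast]
    norm_num
  have hDQ : derivative Q = 2 * X * (derivative P)^2 := by
    have hode := legendre_ode n hn
    rw [← hc, hC2] at hode
    rw [hQ]
    rw [derivative_add, derivative_C_mul, derivative_sq, derivative_mul, derivative_sq]
    have hd1 : derivative (1 - (X:ℝ[X])^2) = -(C 2 * X) := by simp; rw [hC2]; norm_num
    rw [hd1, hC2]
    linear_combination (-(2 * derivative P)) * hode
  have hderiv : ∀ y : ℝ, deriv (fun t => Q.eval t) y = 2 * y * ((derivative P).eval y)^2 := by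
    intro y
    rw [Polynomial.deriv, hDQ]
    simp
  have hcont : ∀ s : Set ℝ, ContinuousOn (fun t => Q.eval t) s :=
    fun s => (Polynomial.continuous Q).continuousOn
  have hdiff : ∀ s : Set ℝ, DifferentiableOn ℝ (fun t => Q.eval t) s :=
    fun s => (Polynomial.differentiable Q).differentiableOn
  have mono : MonotoneOn (fun t => Q.eval t) (Set.Icc 0 1) := by
    apply monotoneOn_of_deriv_nonneg (convex_Icc 0 1) (hcont _) (hdiff _)
    intro y hy
    rw [interior_Icc, Set.mem_Ioo] at hy
    rw [hderiv]
    nlinarith [sq_nonneg ((derivative P).eval y), hy.1]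
  have anti : AntitoneOn (fun t => Q.eval t) (Set.Icc (-1) 0) := by
    apply antitoneOn_of_deriv_nonpos (convex_Icc (-1) 0) (hcont _) (hdiff _)
    intro y hy
    rw [interior_Icc, Set.mem_Ioo] at hy
    rw [hderiv]
    nlinarith [sq_nonneg ((derivative P).eval y), hy.2]
  have hQ1 : Q.eval 1 = c := by
    rw [hQ]
    simp [hP, legendre_eval_one n]
  have hQn1 : Q.eval (-1) = c := by
    rw [hQ]
    simp [hP, legendre_eval_neg_one n]
    rw [← pow_mul, mul_comm n 2, pow_mul]
    norm_num
  have hQx : Q.eval x ≤ c := by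
    rcases le_total x 0 with hx0 | hx0
    · have := anti (Set.mem_Icc.mpr ⟨le_refl _, by norm_num⟩) (Set.mem_Icc.mpr ⟨hx1, hx0⟩) hx1
      simpa [hQn1] using this
    · have := mono (Set.mem_Icc.mpr ⟨hx0, hx2⟩) (Set.mem_Icc.mpr ⟨by norm_num, le_refl _⟩) hx2
      simpa [hQ1] using this
  have hlow : c * ((P.eval x))^2 ≤ Q.eval x := by
    rw [hQ]
    simp only [eval_add, eval_mul, eval_C, eval_pow, eval_sub, eval_one, eval_X]
    have hx3 : (0:ℝ) ≤ 1 - x^2 := by nlinarith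
    nlinarith [mul_nonneg hx3 (sq_nonneg ((derivative P).eval x))]
  have h2 := (mul_le_mul_iff_right₀ hcpos).mp (show c * ((P.eval x))^2 ≤ c * 1 by linarith)
  linarith

theorem amgm_prod (d : ℕ) (hd : 0 < d) (z : Fin d → ℝ) (hz : ∀ i, 0 ≤ z i) :
    ∏ i, z i ≤ ((∑ i, z i)/d)^d := by
  have hd' : (0:ℝ) < d := by exact_mod_cast hd
  have hw : ∑ _i : Fin d, (1/(d:ℝ)) = 1 := by
    simp
    field_simp
  have h := Real.geom_mean_le_arith_mean_weighted Finset.univ (fun _ => 1/(d:ℝ)) z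
    (fun i _ => by positivity) hw (fun i _ => hz i)
  have hprod : (∏ i, z i ^ (1/(d:ℝ))) = (∏ i, z i) ^ (1/(d:ℝ)) :=
    Real.finset_prod_rpow _ _ (fun i _ => hz i) _
  have h2 : ((∏ i, z i) ^ (1/(d:ℝ)))^(d:ℕ) ≤ (∑ i, (1/(d:ℝ)) * z i)^(d:ℕ) := by
    apply pow_le_pow_left₀ (Real.rpow_nonneg (Finset.prod_nonneg fun i _ => hz i) _)
    rw [← hprod]
    exact h
  calc ∏ i, z i = ((∏ i, z i) ^ (1/(d:ℝ)))^(d:ℕ) := by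
        rw [← Real.rpow_natCast ((∏ i, z i)^(1/(d:ℝ))) d,
          ← Real.rpow_mul (Finset.prod_nonneg fun i _ => hz i),
          one_div, inv_mul_cancel₀ (by positivity : (d:ℝ) ≠ 0), Real.rpow_one]
  _ ≤ (∑ i, (1/(d:ℝ)) * z i)^(d:ℕ) := h2
  _ = ((∑ i, z i)/d)^d := by rw [← Finset.mul_sum]; congr 1; ring

/-- For tensor-product orthonormal Legendre polynomials of total order `≤ p`,
`|ψ_k(ξ)|² ≤ (2p/d+1)^d ≤ exp(2p)` on `[-1,1]^d`. -/
theorem legendre_tensor_bound (d p : ℕ) (hd : 0 < d)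
    (k : Fin d → ℕ) (hk : ∑ i, k i ≤ p)
    (ξ : Fin d → ℝ) (hξ : ∀ i, ξ i ∈ Icc (-1 : ℝ) 1) :
    (∏ i, (legendreOrtho (k i)).eval (ξ i)) ^ 2 ≤ (2 * p / d + 1 : ℝ) ^ d ∧
    (2 * p / d + 1 : ℝ) ^ d ≤ Real.exp (2 * p) := by
  have hd' : (0:ℝ) < d := by exact_mod_cast hd
  constructor
  · have key : ∀ i, ((legendreOrtho (k i)).eval (ξ i))^2 ≤ 2 * (k i) + 1 := by
      intro i
      unfold legendreOrtho
      rw [eval_smul, smul_eq_mul, mul_pow, Real.sq_sqrt (by positivity : (0:ℝ) ≤ 2*(k i)+1)]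
      have h1 := legendre_sq_le (k i) (hξ i)
      have h2 : (0:ℝ) ≤ 2*(k i)+1 := by positivity
      nlinarith
    rw [← Finset.prod_pow]
    calc ∏ i, ((legendreOrtho (k i)).eval (ξ i))^2
        ≤ ∏ i, (2*(k i)+1 : ℝ) :=
          Finset.prod_le_prod (fun i _ => sq_nonneg _) (fun i _ => key i)
      _ ≤ ((∑ i, (2*(k i)+1 : ℝ))/d)^d :=
          amgm_prod d hd _ (fun i => by positivity)
      _ ≤ (2 * p / d + 1 : ℝ)^d := by
          apply pow_le_pow_left₀ (by positivity)
          rw [div_le_iff₀ hd']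
          have hsum : (∑ i, (2*(k i)+1 : ℝ)) = 2 * (∑ i, (k i : ℝ)) + d := by
            rw [Finset.sum_add_distrib, ← Finset.mul_sum]
            simp
          rw [hsum]
          have hkc : (∑ i, (k i : ℝ)) ≤ (p:ℝ) := by
            rw [← Nat.cast_sum]
            exact_mod_cast hk
          have : (2 * (p:ℝ) / d + 1) * d = 2 * p + d := by
            field_simp
          rw [this]
          linarith
  · have h1 : (2*(p:ℝ)/d + 1) ≤ Real.exp (2*(p:ℝ)/d) := by
      have := Real.add_one_le_exp (2*(p:ℝ)/d)
      linarith
    calc (2 * (p:ℝ) / d + 1)^d ≤ (Real.exp (2*(p:ℝ)/d))^d :=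
          pow_le_pow_left₀ (by positivity) h1 d
      _ = Real.exp (2*(p:ℝ)) := by
          rw [← Real.exp_nat_mul]
          congr 1
          field_simp
end

section
/- Suppose functions ψ_1, ..., ψ_P on a probability space (S, ν) satisfy sup_{k} sup_{ξ∈S} |ψ_k(ξ)|/B(ξ) = 1 where B(ξ) = max_{k=1:P} |ψ_k(ξ)| > 0 ν-a.e., and 0 < ∫_S B² dν < ∞. Let c = (∫_S B² dν)^{-1/2}. Then for the sampling density proportional to B² dν with weight w = 1/(cB), the coherence sup_{k, ξ∈S} |w(ξ)ψ_k(ξ)|² equals c^{-2} = ∫_S B² dν; moreover, for any other measurable envelope B̂ : S → (0,∞) with 0 < ∫_S B̂² dν < ∞ that differs from a positive multiple of B on a set of positive ν-measure, the corresponding coherence sup_{k, ξ∈S} |ψ_k(ξ)/(ĉ B̂(ξ))|² with ĉ = (∫_S B̂² dν)^{-1/2} is strictly greater than ∫_S B² dν. -/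
open MeasureTheory ENNReal

/-- Coherence-optimality of sampling proportional to the envelope `B`:
with `B ξ = max_k |ψ_k ξ|` and `c = (∫ B² dν)^{-1/2}`, the coherence of the
sampling with envelope `B` equals `∫ B² dν`, and any other envelope `B̂`
that is not a.e. a positive multiple of `B` (up to sets of measure zero)
has strictly larger coherence. -/
theorem coherence_optimal_sampling
    {α : Type*} [MeasurableSpace α] (ν : Measure α) [IsProbabilityMeasure ν]
    (P : ℕ) (hP : 0 < P) (ψ : Fin P → α → ℝ)
    (hψ : ∀ k, Measurable (ψ k))
    (B : α → ℝ) (hB : ∀ ξ, B ξ = ⨆ k : Fin P, |ψ k ξ|)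
    (hBpos : ∀ ξ, 0 < B ξ)
    (hBsup : (⨆ k : Fin P, ⨆ ξ : α, |ψ k ξ| / B ξ) = 1)
    (hBint : Integrable (fun ξ => B ξ ^ 2) ν)
    (hBintpos : 0 < ∫ ξ, B ξ ^ 2 ∂ν)
    (c : ℝ) (hc : c = (Real.sqrt (∫ ξ, B ξ ^ 2 ∂ν))⁻¹) :
    (⨆ k : Fin P, ⨆ ξ : α, ENNReal.ofReal ((ψ k ξ / (c * B ξ)) ^ 2)) =
        ENNReal.ofReal (∫ ξ, B ξ ^ 2 ∂ν) ∧
    ∀ (Bhat : α → ℝ), Measurable Bhat → (∀ ξ, 0 < Bhat ξ) →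
      Integrable (fun ξ => Bhat ξ ^ 2) ν → 0 < ∫ ξ, Bhat ξ ^ 2 ∂ν →
      (∀ t : ℝ, 0 < t → 0 < ν {ξ | Bhat ξ ≠ t * B ξ}) →
      ∀ chat : ℝ, chat = (Real.sqrt (∫ ξ, Bhat ξ ^ 2 ∂ν))⁻¹ →
      ENNReal.ofReal (∫ ξ, B ξ ^ 2 ∂ν) <
        ⨆ k : Fin P, ⨆ ξ : α, ENNReal.ofReal ((ψ k ξ / (chat * Bhat ξ)) ^ 2) := by
  haveI : Nonempty (Fin P) := Fin.pos_iff_nonempty.mp hP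
  set I : ℝ := ∫ ξ, B ξ ^ 2 ∂ν with hIdef
  have hI : 0 < I := hBintpos
  -- α is nonempty
  have hne : Nonempty α := by
    by_contra h
    rw [not_nonempty_iff] at h
    have h1 : ν Set.univ = 1 := measure_univ
    rw [Set.univ_eq_empty_iff.mpr h] at h1
    simp at h1
  obtain ⟨ξ0⟩ := hne
  -- each |ψ k ξ| ≤ B ξ, and the max is attained
  have hle : ∀ k ξ, |ψ k ξ| ≤ B ξ := by
    intro k ξ
    rw [hB]
    exact le_ciSup (Set.Finite.bddAbove (Set.finite_range fun j : Fin P => |ψ j ξ|)) k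
  have hatt : ∀ ξ, ∃ k, |ψ k ξ| = B ξ := by
    intro ξ
    obtain ⟨k0, hk0⟩ := Finite.exists_max (fun k : Fin P => |ψ k ξ|)
    refine ⟨k0, le_antisymm (hle k0 ξ) ?_⟩
    rw [hB]
    exact ciSup_le hk0
  have hcpos : 0 < c := by
    rw [hc]; exact inv_pos.2 (Real.sqrt_pos.2 hI)
  have hc2 : c ^ 2 = I⁻¹ := by
    rw [hc, inv_pow, Real.sq_sqrt hI.le]
  have key : ∀ (c' : ℝ) (G : α → ℝ),
      ∀ k ξ, (ψ k ξ / (c' * G ξ)) ^ 2 = (ψ k ξ) ^ 2 / (c' ^ 2 * G ξ ^ 2) := by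
    intro c' G k ξ
    rw [div_pow, mul_pow]
  constructor
  · -- Part 1
    apply le_antisymm
    · refine iSup_le fun k => iSup_le fun ξ => ?_
      apply ENNReal.ofReal_le_ofReal
      rw [key c B k ξ, hc2]
      have h1 : (ψ k ξ) ^ 2 ≤ B ξ ^ 2 := by
        rw [← sq_abs]
        exact pow_le_pow_left₀ (abs_nonneg _) (hle k ξ) 2
      have h2 : 0 < I⁻¹ * B ξ ^ 2 := mul_pos (inv_pos.2 hI) (pow_pos (hBpos ξ) 2)
      rw [div_le_iff₀ h2]
      calc (ψ k ξ) ^ 2 ≤ B ξ ^ 2 := h1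
        _ = I * (I⁻¹ * B ξ ^ 2) := by
            rw [← mul_assoc, mul_inv_cancel₀ hI.ne', one_mul]
    · obtain ⟨k0, hk0⟩ := hatt ξ0
      have heq : ENNReal.ofReal I = ENNReal.ofReal ((ψ k0 ξ0 / (c * B ξ0)) ^ 2) := by
        congr 1
        rw [key c B k0 ξ0, hc2, ← sq_abs (ψ k0 ξ0), hk0]
        have hpos : (0:ℝ) < I⁻¹ * B ξ0 ^ 2 := mul_pos (inv_pos.2 hI) (pow_pos (hBpos ξ0) 2)
        rw [eq_div_iff hpos.ne']
        field_simp
      rw [heq]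
      exact le_iSup_of_le k0 (le_iSup_of_le ξ0 le_rfl)
  · -- Part 2
    intro Bhat hBhatm hBhatpos hBhatint hBhatintpos hdiff chat hchat
    set J : ℝ := ∫ ξ, Bhat ξ ^ 2 ∂ν with hJdef
    have hJ : 0 < J := hBhatintpos
    have hchatpos : 0 < chat := by
      rw [hchat]; exact inv_pos.2 (Real.sqrt_pos.2 hJ)
    have hchat2 : chat ^ 2 = J⁻¹ := by
      rw [hchat, inv_pow, Real.sq_sqrt hJ.le]
    by_contra hcon
    push_neg at hcon
    -- pointwise bound
    have hpt : ∀ ξ, J / I * B ξ ^ 2 ≤ Bhat ξ ^ 2 := by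
      intro ξ
      obtain ⟨k0, hk0⟩ := hatt ξ
      have h1 : ENNReal.ofReal ((ψ k0 ξ / (chat * Bhat ξ)) ^ 2) ≤ ENNReal.ofReal I :=
        le_trans (le_iSup_of_le k0 (le_iSup (fun ξ' => ENNReal.ofReal ((ψ k0 ξ' / (chat * Bhat ξ')) ^ 2)) ξ)) hcon
      have h2 : (ψ k0 ξ / (chat * Bhat ξ)) ^ 2 ≤ I :=
        (ENNReal.ofReal_le_ofReal_iff hI.le).mp h1
      rw [key chat Bhat k0 ξ, hchat2, ← sq_abs (ψ k0 ξ), hk0] at h2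
      have hBh2 : 0 < J⁻¹ * Bhat ξ ^ 2 := mul_pos (inv_pos.2 hJ) (pow_pos (hBhatpos ξ) 2)
      rw [div_le_iff₀ hBh2] at h2
      have h3 := mul_le_mul_of_nonneg_left h2 (div_pos hJ hI).le
      have h4 : J / I * (I * (J⁻¹ * Bhat ξ ^ 2)) = Bhat ξ ^ 2 := by
        field_simp
      linarith
    -- integrate the pointwise bound; equality of integrals forces a.e. equality
    set g : α → ℝ := fun ξ => Bhat ξ ^ 2 - J / I * B ξ ^ 2 with hgdef
    have hgnn : 0 ≤ g := fun ξ => sub_nonneg.2 (hpt ξ)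
    have hgint : Integrable g ν := hBhatint.sub (hBint.const_mul (J / I))
    have hgzero : ∫ ξ, g ξ ∂ν = 0 := by
      have : ∫ ξ, g ξ ∂ν = (∫ ξ, Bhat ξ ^ 2 ∂ν) - J / I * ∫ ξ, B ξ ^ 2 ∂ν := by
        rw [integral_sub hBhatint (hBint.const_mul (J / I)), integral_const_mul]
      rw [this, ← hIdef, ← hJdef, div_mul_cancel₀ _ hI.ne', sub_self]
    have hae : g =ᵐ[ν] 0 := (integral_eq_zero_iff_of_nonneg hgnn hgint).mp hgzero
    set t : ℝ := Real.sqrt (J / I) with htdef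
    have ht : 0 < t := Real.sqrt_pos.2 (div_pos hJ hI)
    have haeeq : ∀ᵐ ξ ∂ν, Bhat ξ = t * B ξ := by
      filter_upwards [hae] with ξ hξ
      have h5 : Bhat ξ ^ 2 = J / I * B ξ ^ 2 := by
        have := sub_eq_zero.mp (show Bhat ξ ^ 2 - J / I * B ξ ^ 2 = 0 from hξ)
        exact this
      have h6 : Bhat ξ = Real.sqrt (J / I * B ξ ^ 2) := by
        rw [← h5, Real.sqrt_sq (hBhatpos ξ).le]
      rw [h6, Real.sqrt_mul (div_pos hJ hI).le, Real.sqrt_sq (hBpos ξ).le]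
    have hzero : ν {ξ | Bhat ξ ≠ t * B ξ} = 0 := ae_iff.mp haeeq
    have := hdiff t ht
    rw [hzero] at this
    exact lt_irrefl 0 this
end

section
/- For any measurable functions ψ_1, ..., ψ_P on a probability space (S, ν), and any measurable G : S → (0,∞) with ∫_S G² dν < ∞, the coherence μ(G) := (sup_{k, ξ∈S} |ψ_k(ξ)|²/G(ξ)²) · ∫_S G² dν satisfies μ(G) ≥ ∫_S B² dν where B(ξ) = max_{k=1:P}|ψ_k(ξ)|, with equality when G = B. -/
open MeasureTheory ENNReal

/-- Lower bound on the coherence parameter: for any positive envelope `G` with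
`∫ G² dν < ∞`, `μ(G) = (sup_{k,ξ} ψ_k(ξ)²/G(ξ)²) · ∫ G² dν ≥ ∫ B² dν` where
`B ξ = max_k |ψ_k ξ|`, with equality when `G = B`. -/
theorem coherence_lower_bound
    {α : Type*} [MeasurableSpace α] (ν : Measure α) [IsProbabilityMeasure ν]
    (P : ℕ) (hP : 0 < P) (ψ : Fin P → α → ℝ)
    (hψ : ∀ k, Measurable (ψ k))
    (B : α → ℝ) (hB : ∀ ξ, B ξ = ⨆ k : Fin P, |ψ k ξ|)
    (hBpos : ∀ ξ, 0 < B ξ)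
    (hBint : Integrable (fun ξ => B ξ ^ 2) ν) :
    (∀ G : α → ℝ, Measurable G → (∀ ξ, 0 < G ξ) →
      Integrable (fun ξ => G ξ ^ 2) ν →
      ENNReal.ofReal (∫ ξ, B ξ ^ 2 ∂ν) ≤
        (⨆ k : Fin P, ⨆ ξ : α, ENNReal.ofReal (ψ k ξ ^ 2 / G ξ ^ 2)) *
          ENNReal.ofReal (∫ ξ, G ξ ^ 2 ∂ν)) ∧
    (⨆ k : Fin P, ⨆ ξ : α, ENNReal.ofReal (ψ k ξ ^ 2 / B ξ ^ 2)) *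
        ENNReal.ofReal (∫ ξ, B ξ ^ 2 ∂ν) =
      ENNReal.ofReal (∫ ξ, B ξ ^ 2 ∂ν) := by
  haveI : Nonempty (Fin P) := ⟨⟨0, hP⟩⟩
  haveI : Nonempty α := by
    by_contra h
    rw [not_nonempty_iff] at h
    have h1 : ν Set.univ = 1 := measure_univ
    rw [Set.univ_eq_empty_iff.2 h, measure_empty] at h1
    exact zero_ne_one h1
  have hmax : ∀ ξ, ∃ k : Fin P, B ξ = |ψ k ξ| ∧ ∀ j, |ψ j ξ| ≤ |ψ k ξ| := by
    intro ξ
    obtain ⟨k, hk⟩ := Finite.exists_max (fun j : Fin P => |ψ j ξ|)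
    refine ⟨k, le_antisymm ?_ ?_, hk⟩
    · rw [hB]; exact ciSup_le (f := fun j : Fin P => |ψ j ξ|) fun j => hk j
    · rw [hB]; exact le_ciSup (f := fun j : Fin P => |ψ j ξ|) (Set.Finite.bddAbove (Set.finite_range _)) k
  constructor
  · intro G hGmeas hGpos hGint
    set S := ⨆ k : Fin P, ⨆ ξ : α, ENNReal.ofReal (ψ k ξ ^ 2 / G ξ ^ 2) with hS
    by_cases hStop : S = ⊤
    · rw [hStop]
      have hpos : 0 < ∫ ξ, G ξ ^ 2 ∂ν := by
        rw [integral_pos_iff_support_of_nonneg (fun ξ => sq_nonneg (G ξ))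
          hGint]
        have : (Function.support fun ξ => G ξ ^ 2) = Set.univ := by
          ext ξ; simp [Function.mem_support, (hGpos ξ).ne']
        rw [this, measure_univ]; exact zero_lt_one
      rw [ENNReal.top_mul (by simp [ENNReal.ofReal_eq_zero, not_le, hpos])]
      exact le_top
    · have hSle : ∀ k ξ, ψ k ξ ^ 2 / G ξ ^ 2 ≤ S.toReal := by
        intro k ξ
        have h1 : ENNReal.ofReal (ψ k ξ ^ 2 / G ξ ^ 2) ≤ S := by
          rw [hS]
          exact le_trans (le_iSup (fun ξ => ENNReal.ofReal (ψ k ξ ^ 2 / G ξ ^ 2)) ξ)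
            (le_iSup (fun k => ⨆ ξ : α, ENNReal.ofReal (ψ k ξ ^ 2 / G ξ ^ 2)) k)
        have hnn : 0 ≤ ψ k ξ ^ 2 / G ξ ^ 2 :=
          div_nonneg (sq_nonneg _) (sq_nonneg _)
        exact (ENNReal.ofReal_le_iff_le_toReal hStop).mp h1
      have hpt : ∀ ξ, B ξ ^ 2 ≤ S.toReal * G ξ ^ 2 := by
        intro ξ
        obtain ⟨k, hk, -⟩ := hmax ξ
        have h2 := hSle k ξ
        have hG2 : 0 < G ξ ^ 2 := pow_pos (hGpos ξ) 2
        rw [hk, sq_abs]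
        rwa [div_le_iff₀ hG2] at h2
      have hint : ∫ ξ, B ξ ^ 2 ∂ν ≤ S.toReal * ∫ ξ, G ξ ^ 2 ∂ν := by
        rw [← integral_const_mul]
        exact integral_mono hBint (hGint.const_mul _) hpt
      calc ENNReal.ofReal (∫ ξ, B ξ ^ 2 ∂ν)
          ≤ ENNReal.ofReal (S.toReal * ∫ ξ, G ξ ^ 2 ∂ν) :=
            ENNReal.ofReal_le_ofReal hint
        _ = ENNReal.ofReal S.toReal * ENNReal.ofReal (∫ ξ, G ξ ^ 2 ∂ν) :=
            ENNReal.ofReal_mul ENNReal.toReal_nonneg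
        _ = S * ENNReal.ofReal (∫ ξ, G ξ ^ 2 ∂ν) := by
            rw [ENNReal.ofReal_toReal hStop]
  · have h1 : (⨆ k : Fin P, ⨆ ξ : α, ENNReal.ofReal (ψ k ξ ^ 2 / B ξ ^ 2)) = 1 := by
      apply le_antisymm
      · refine iSup_le fun k => iSup_le fun ξ => ?_
        have hle : ψ k ξ ^ 2 / B ξ ^ 2 ≤ 1 := by
          rw [div_le_one (pow_pos (hBpos ξ) 2)]
          obtain ⟨j, hj, hall⟩ := hmax ξ
          rw [hj, ← sq_abs (ψ k ξ)]
          exact pow_le_pow_left₀ (abs_nonneg _) (hall k) 2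
        calc ENNReal.ofReal (ψ k ξ ^ 2 / B ξ ^ 2) ≤ ENNReal.ofReal 1 :=
              ENNReal.ofReal_le_ofReal hle
          _ = 1 := ENNReal.ofReal_one
      · have ξ₀ : α := Classical.arbitrary α
        obtain ⟨k, hk, -⟩ := hmax ξ₀
        have heq : ψ k ξ₀ ^ 2 / B ξ₀ ^ 2 = 1 := by
          rw [hk, sq_abs]
          exact div_self (pow_pos (hBpos ξ₀) 2 |>.ne' |> fun h => by
            rw [hk, sq_abs] at h; exact h)
        calc (1 : ℝ≥0∞) = ENNReal.ofReal (ψ k ξ₀ ^ 2 / B ξ₀ ^ 2) := by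
              rw [heq, ENNReal.ofReal_one]
          _ ≤ ⨆ ξ : α, ENNReal.ofReal (ψ k ξ ^ 2 / B ξ ^ 2) :=
              le_iSup (fun ξ => ENNReal.ofReal (ψ k ξ ^ 2 / B ξ ^ 2)) ξ₀
          _ ≤ _ := le_iSup (fun k => ⨆ ξ : α, ENNReal.ofReal (ψ k ξ ^ 2 / B ξ ^ 2)) k
    rw [h1, one_mul]
end
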